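/- Let m ≥ 3. Then u_{Σ_{ar}}(α Σ_{bs}) = u_{Σ_{ar}}(α) for all α ∈ ℤ^{2^m} and all generators, i.e. for all a,b ∈ {1,…,m} and r,s ∈ {1,2}. -/

import Mathlib

open Matrix

/-- `bwBit i a` is the `a`-th binary digit of `i`. -/
def bwBit (i a : ℕ) : ℕ := i / 2 ^ a % 2

/-- `bwPar m i` is the number of zero digits in the length-`m` binary expansion of `i`, mod 2. -/
def bwPar (m i : ℕ) : ℕ := ((Finset.range m).filter fun a => bwBit i a = 0).card % 2

/-- The exponent of `√2` in the `(i,j)` entry of the Gram matrix of `BW(m)`. -/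
def bwExp (m i j : ℕ) : ℤ :=
  (bwPar m i : ℤ) + (bwPar m j : ℤ) - 2 * (((m + 1) / 2 : ℕ) : ℤ) +
    ∑ l ∈ Finset.range m,
      (2 * (bwBit i l : ℤ) * (bwBit j l : ℤ) - (bwBit i l : ℤ) - (bwBit j l : ℤ) + 2)

/-- The Gram matrix of the Barnes-Wall lattice `BW(m)`:
`G i j = (w_i, w_j) = √2 ^ (p i + p j - 2⌈m/2⌉ + ∑ (2 i[l] j[l] - i[l] - j[l] + 2))`. -/
noncomputable def bwGram (m : ℕ) : Matrix (Fin (2 ^ m)) (Fin (2 ^ m)) ℝ :=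
  Matrix.of fun i j => Real.sqrt 2 ^ bwExp m (i : ℕ) (j : ℕ)

/-- The matrix of the lattice automorphism `Σ_{ar}` of `BW(m)` in the basis `w_i`
(acting on row vectors from the right); `r = 1` gives `Σ_{a1}`, any other `r` gives `Σ_{a2}`. -/
def bwSigma (m a r : ℕ) : Matrix (Fin (2 ^ m)) (Fin (2 ^ m)) ℤ :=
  Matrix.of fun i j =>
    if r = 1 then
      if bwBit (i : ℕ) (m - a) = 0 then
        (if j = i then -1 else 0) +
          (if (j : ℕ) = (i : ℕ) + 2 ^ (m - a) then 2 ^ bwPar m (i : ℕ) else 0)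
      else if j = i then 1 else 0
    else
      if bwBit (i : ℕ) (m - a) = 1 then
        (if j = i then -1 else 0) +
          (if (j : ℕ) + 2 ^ (m - a) = (i : ℕ) then 2 ^ bwPar m (i : ℕ) else 0)
      else if j = i then 1 else 0

/-- `A_{ar} = Σ_{ar} - I`. -/
def bwA (m a r : ℕ) : Matrix (Fin (2 ^ m)) (Fin (2 ^ m)) ℤ := bwSigma m a r - 1

/-- The half-Gram matrix `H` of `BW(m)`: `H i j = G i j` for `i > j`, `G i i / 2` on the
diagonal, and `0` above the diagonal. -/
noncomputable def bwH (m : ℕ) : Matrix (Fin (2 ^ m)) (Fin (2 ^ m)) ℝ :=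
  Matrix.of fun i j =>
    if j < i then Real.sqrt 2 ^ bwExp m (i : ℕ) (j : ℕ)
    else if i = j then Real.sqrt 2 ^ (bwExp m (i : ℕ) (i : ℕ) - 2)
    else 0

/-- The matrix `H - Σ H Σᵀ` underlying the bilinear form `B_Σ`. -/
noncomputable def bwBMat (m : ℕ) (S : Matrix (Fin (2 ^ m)) (Fin (2 ^ m)) ℤ) :
    Matrix (Fin (2 ^ m)) (Fin (2 ^ m)) ℝ :=
  bwH m - S.map (Int.cast : ℤ → ℝ) * bwH m * (S.map (Int.cast : ℤ → ℝ))ᵀ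

/-- The bilinear form `B_Σ(α, β) = ∑_{i > j} α_i β_j (H - Σ H Σᵀ)_{ij}`. -/
noncomputable def bwBQuad (m : ℕ) (S : Matrix (Fin (2 ^ m)) (Fin (2 ^ m)) ℤ)
    (α β : Fin (2 ^ m) → ℤ) : ℝ :=
  ∑ i, ∑ j, if j < i then (α i : ℝ) * (β j : ℝ) * bwBMat m S i j else 0

/-- `u_Σ(α) = (-1)^{B_Σ(α,α)}`, rendered as `cos (π B_Σ(α,α))`, which agrees with
`(-1)^k` whenever `B_Σ(α,α)` is the integer `k`. -/
noncomputable def bwU (m : ℕ) (S : Matrix (Fin (2 ^ m)) (Fin (2 ^ m)) ℤ)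
    (α : Fin (2 ^ m) → ℤ) : ℝ :=
  Real.cos (Real.pi * bwBQuad m S α α)



lemma bwBit_lt (i a : ℕ) : bwBit i a < 2 := Nat.mod_lt _ (by norm_num)
lemma bwPar_lt (m i : ℕ) : bwPar m i < 2 := Nat.mod_lt _ (by norm_num)

lemma bwBit_add_self (i c : ℕ) (h : bwBit i c = 0) : bwBit (i + 2 ^ c) c = 1 := by
  unfold bwBit at *
  rw [Nat.add_div_right _ (Nat.two_pow_pos c)]
  omega

lemma bwBit_add_lt (i c l : ℕ) (hl : l < c) : bwBit (i + 2 ^ c) l = bwBit i l := by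
  unfold bwBit
  have h2 : 2 ^ c = 2 ^ (c - l) * 2 ^ l := by rw [← pow_add]; congr 1; omega
  rw [h2, Nat.add_mul_div_right _ _ (Nat.two_pow_pos l)]
  have h3 : ∃ k, 2 ^ (c - l) = 2 * k := ⟨2 ^ (c - l - 1), by rw [← pow_succ']; congr 1; omega⟩
  obtain ⟨k, hk⟩ := h3
  omega

lemma bwAux_lt (x c t : ℕ) (hct : c < t) (hx : x < 2 ^ t) (h : x / 2 ^ c % 2 = 0) :
    x + 2 ^ c < 2 ^ t := by
  have hpc : 0 < 2 ^ c := Nat.two_pow_pos _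
  have h2t : (2:ℕ) ^ t = 2 ^ c * 2 ^ (t - c) := by rw [← pow_add]; congr 1; omega
  have hdm := Nat.div_add_mod x (2 ^ c)
  have hvlt : x % 2 ^ c < 2 ^ c := Nat.mod_lt _ hpc
  have hu : x / 2 ^ c < 2 ^ (t - c) := by
    rw [h2t] at hx
    exact Nat.div_lt_of_lt_mul hx
  have hUeven : 2 * 2 ^ (t - c - 1) = 2 ^ (t - c) := by
    rw [← pow_succ']; congr 1; omega
  have hstep : x / 2 ^ c + 2 ≤ 2 ^ (t - c) := by omega
  have hmul : 2 ^ c * (x / 2 ^ c + 2) ≤ 2 ^ c * 2 ^ (t - c) := Nat.mul_le_mul_left _ hstep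
  have hexp : 2 ^ c * (x / 2 ^ c + 2) = 2 ^ c * (x / 2 ^ c) + 2 ^ c * 2 := by ring
  omega

lemma bwBit_add_gt (i c l : ℕ) (hl : c < l) (h : bwBit i c = 0) :
    bwBit (i + 2 ^ c) l = bwBit i l := by
  unfold bwBit at *
  have hpos : 0 < 2 ^ l := Nat.two_pow_pos l
  have hdecomp := Nat.div_add_mod i (2 ^ l)
  have hslt : i % 2 ^ l < 2 ^ l := Nat.mod_lt _ hpos
  have h2l : (2:ℕ) ^ l = 2 ^ c * 2 ^ (l - c) := by rw [← pow_add]; congr 1; omega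
  have hsc2 : i % 2 ^ l / 2 ^ c % 2 = 0 := by
    have hsc : i % 2 ^ l / 2 ^ c = (i / 2 ^ c) % 2 ^ (l - c) := by
      rw [h2l, Nat.mod_mul_right_div_self]
    rw [hsc]
    have hd : (2:ℕ) ∣ 2 ^ (l - c) := dvd_pow_self 2 (by omega)
    rw [Nat.mod_mod_of_dvd _ hd]; exact h
  have hkey : i % 2 ^ l + 2 ^ c < 2 ^ l := bwAux_lt _ _ _ hl hslt hsc2
  have heq : (i + 2 ^ c) / 2 ^ l = i / 2 ^ l := by
    have h1 : i + 2 ^ c = i % 2 ^ l + 2 ^ c + 2 ^ l * (i / 2 ^ l) := by omega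
    rw [h1, Nat.add_mul_div_left _ _ hpos, Nat.div_eq_of_lt hkey, zero_add]
  rw [heq]

lemma bwBit_add_ne (i c l : ℕ) (h : bwBit i c = 0) (hlc : l ≠ c) :
    bwBit (i + 2 ^ c) l = bwBit i l := by
  rcases lt_or_gt_of_ne hlc with h' | h'
  · exact bwBit_add_lt i c l h'
  · exact bwBit_add_gt i c l h' h

lemma bwPar_flip_add (m i c : ℕ) (hc : c < m) (h : bwBit i c = 0) :
    bwPar m (i + 2 ^ c) = 1 - bwPar m i := by
  unfold bwPar
  have hmem : c ∈ (Finset.range m).filter fun a => bwBit i a = 0 := by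
    simp [Finset.mem_filter, Finset.mem_range, hc, h]
  have hset : ((Finset.range m).filter fun a => bwBit (i + 2 ^ c) a = 0) =
      ((Finset.range m).filter fun a => bwBit i a = 0).erase c := by
    ext l
    simp only [Finset.mem_filter, Finset.mem_erase, Finset.mem_range]
    constructor
    · rintro ⟨hlm, hbl⟩
      have hlc : l ≠ c := by
        rintro rfl
        rw [bwBit_add_self i l h] at hbl; exact one_ne_zero hbl
      exact ⟨hlc, hlm, by rwa [bwBit_add_ne i c l h hlc] at hbl⟩
    · rintro ⟨hlc, hlm, hbl⟩
      exact ⟨hlm, by rwa [bwBit_add_ne i c l h hlc]⟩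
  rw [hset, Finset.card_erase_of_mem hmem]
  have hpos : 0 < ((Finset.range m).filter fun a => bwBit i a = 0).card :=
    Finset.card_pos.mpr ⟨c, hmem⟩
  omega

lemma bwPar_flip_sub (m i c k : ℕ) (hc : c < m) (h : bwBit i c = 1) (hk : k + 2 ^ c = i) :
    bwPar m k = 1 - bwPar m i := by
  have hbk : bwBit k c = 0 := by
    have : bwBit (k + 2 ^ c) c = bwBit i c := by rw [hk]
    unfold bwBit at *
    rw [Nat.add_div_right _ (Nat.two_pow_pos c)] at this
    omega
  have := bwPar_flip_add m k c hc hbk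
  rw [hk] at this
  have h1 := bwPar_lt m i
  have h2 := bwPar_lt m k
  omega

lemma bwPar_sum (m i : ℕ) : (bwPar m i + ∑ l ∈ Finset.range m, bwBit i l) % 2 = m % 2 := by
  have hsum : ∑ l ∈ Finset.range m, bwBit i l =
      ((Finset.range m).filter fun a => ¬ bwBit i a = 0).card := by
    rw [Finset.card_filter]
    apply Finset.sum_congr rfl
    intro l _
    have := bwBit_lt i l
    split <;> omega
  have hcard := Finset.card_filter_add_card_filter_not
    (s := Finset.range m) (p := fun a => bwBit i a = 0)
  rw [Finset.card_range] at hcard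
  unfold bwPar
  omega

lemma bwExp_even (m i j : ℕ) : 2 ∣ bwExp m i j := by
  have hXi := bwPar_sum m i
  have hXj := bwPar_sum m j
  have hsum : (∑ l ∈ Finset.range m,
        (2 * (bwBit i l : ℤ) * (bwBit j l : ℤ) - (bwBit i l : ℤ) - (bwBit j l : ℤ) + 2))
      - (∑ l ∈ Finset.range m, (bwBit i l : ℤ)) - (∑ l ∈ Finset.range m, (bwBit j l : ℤ))
      = 2 * ∑ l ∈ Finset.range m,
        ((bwBit i l : ℤ) * (bwBit j l : ℤ) - (bwBit i l : ℤ) - (bwBit j l : ℤ) + 1) := by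
    rw [← Finset.sum_sub_distrib, ← Finset.sum_sub_distrib, Finset.mul_sum]
    apply Finset.sum_congr rfl
    intro l _; ring
  have hc1 : ((bwPar m i + ∑ l ∈ Finset.range m, bwBit i l : ℕ) : ℤ)
      = (bwPar m i : ℤ) + ∑ l ∈ Finset.range m, (bwBit i l : ℤ) := by push_cast; ring
  have hc2 : ((bwPar m j + ∑ l ∈ Finset.range m, bwBit j l : ℕ) : ℤ)
      = (bwPar m j : ℤ) + ∑ l ∈ Finset.range m, (bwBit j l : ℤ) := by push_cast; ring
  unfold bwExp
  omega

lemma bwExp_ge (m i j : ℕ) : (bwPar m i : ℤ) + (bwPar m j : ℤ) - 1 ≤ bwExp m i j := by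
  have hsum : (m : ℤ) ≤ ∑ l ∈ Finset.range m,
      (2 * (bwBit i l : ℤ) * (bwBit j l : ℤ) - (bwBit i l : ℤ) - (bwBit j l : ℤ) + 2) := by
    calc (m : ℤ) = ∑ _l ∈ Finset.range m, (1 : ℤ) := by simp
      _ ≤ _ := by
        apply Finset.sum_le_sum
        intro l _
        have hb := bwBit_lt i l
        have hc := bwBit_lt j l
        have hb' : (bwBit i l : ℤ) = 0 ∨ (bwBit i l : ℤ) = 1 := by omega
        have hc' : (bwBit j l : ℤ) = 0 ∨ (bwBit j l : ℤ) = 1 := by omega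
        rcases hb' with h | h <;> rcases hc' with h' | h' <;> rw [h, h'] <;> norm_num
  have hK : 2 * (((m + 1) / 2 : ℕ) : ℤ) ≤ (m : ℤ) + 1 := by
    have : (m + 1) / 2 * 2 ≤ m + 1 := Nat.div_mul_le_self _ _
    push_cast
    omega
  unfold bwExp
  omega

lemma bwExp_nonneg (m i j : ℕ) : 0 ≤ bwExp m i j := by
  have h1 := bwExp_even m i j
  have h2 := bwExp_ge m i j
  have h3 : (0:ℤ) ≤ bwPar m i := by positivity
  have h4 : (0:ℤ) ≤ bwPar m j := by positivity
  omega

lemma bwExp_ge_two (m i j : ℕ) (hi : bwPar m i = 1) (hj : bwPar m j = 1) :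
    2 ≤ bwExp m i j := by
  have h1 := bwExp_even m i j
  have h2 := bwExp_ge m i j
  rw [hi, hj] at h2
  norm_num at h2
  omega

lemma bwExp_diag (m i : ℕ) :
    bwExp m i i = 2 * (bwPar m i : ℤ) + 2 * m - 2 * (((m + 1) / 2 : ℕ) : ℤ) := by
  unfold bwExp
  have hsum : ∑ l ∈ Finset.range m,
      (2 * (bwBit i l : ℤ) * (bwBit i l : ℤ) - (bwBit i l : ℤ) - (bwBit i l : ℤ) + 2)
      = ∑ _l ∈ Finset.range m, (2 : ℤ) := by
    apply Finset.sum_congr rfl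
    intro l _
    have hb := bwBit_lt i l
    have hb' : (bwBit i l : ℤ) = 0 ∨ (bwBit i l : ℤ) = 1 := by omega
    rcases hb' with h | h <;> rw [h] <;> ring
  rw [hsum]
  simp
  ring

lemma bwExp_diag_ge (m i : ℕ) (hm : 2 ≤ m) : 2 ≤ bwExp m i i := by
  rw [bwExp_diag]
  have h1 : (0:ℤ) ≤ bwPar m i := by positivity
  have h2 : ((m+1)/2 : ℕ) ≤ (m + 1) / 2 := le_refl _
  have h3 : (((m+1)/2 : ℕ) : ℤ) * 2 ≤ (m:ℤ) + 1 := by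
    have : (m + 1) / 2 * 2 ≤ m + 1 := Nat.div_mul_le_self _ _
    exact_mod_cast this
  omega

lemma bwExp_diag_ge_four (m i : ℕ) (hm : 2 ≤ m) (hi : bwPar m i = 1) :
    4 ≤ bwExp m i i := by
  rw [bwExp_diag, hi]
  have h3 : (((m+1)/2 : ℕ) : ℤ) * 2 ≤ (m:ℤ) + 1 := by
    have : (m + 1) / 2 * 2 ≤ m + 1 := Nat.div_mul_le_self _ _
    exact_mod_cast this
  omega

def bwHZ (m : ℕ) : Matrix (Fin (2 ^ m)) (Fin (2 ^ m)) ℤ :=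
  Matrix.of fun i j =>
    if j < i then 2 ^ ((bwExp m (i : ℕ) (j : ℕ)).toNat / 2)
    else if i = j then 2 ^ (((bwExp m (i : ℕ) (i : ℕ)).toNat - 2) / 2)
    else 0

lemma sqrt_two_zpow (e : ℤ) (he : 0 ≤ e) (he2 : 2 ∣ e) :
    Real.sqrt 2 ^ e = ((2 : ℤ) ^ (e.toNat / 2) : ℤ) := by
  obtain ⟨n, hn⟩ : ∃ n : ℕ, e = ((2 * n : ℕ) : ℤ) := ⟨e.toNat / 2, by omega⟩
  rw [hn]
  have h2 : ((2 * n : ℕ) : ℤ).toNat / 2 = n := by omega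
  rw [h2, zpow_natCast, pow_mul, Real.sq_sqrt (by norm_num : (2:ℝ) ≥ 0)]
  push_cast
  ring

lemma bwH_eq_map (m : ℕ) (hm : 2 ≤ m) :
    bwH m = (bwHZ m).map (Int.cast : ℤ → ℝ) := by
  ext i j
  simp only [bwH, bwHZ, Matrix.map_apply, Matrix.of_apply]
  by_cases h1 : j < i
  · simp only [h1, if_true]
    exact sqrt_two_zpow _ (bwExp_nonneg _ _ _) (bwExp_even _ _ _)
  · simp only [h1, if_false]
    by_cases h2 : i = j
    · simp only [h2, if_true]
      have he := bwExp_diag_ge m (j : ℕ) hm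
      have hev := bwExp_even m (j : ℕ) (j : ℕ)
      have := sqrt_two_zpow (bwExp m (j : ℕ) (j : ℕ) - 2) (by omega) (by omega)
      rw [this]
      congr 2
      omega
    · simp [h2]

lemma bwHZ_par_even (m : ℕ) (hm : 2 ≤ m) (i j : Fin (2 ^ m))
    (hi : bwPar m (i : ℕ) = 1) (hj : bwPar m (j : ℕ) = 1) :
    ((bwHZ m i j : ℤ) : ZMod 2) = 0 := by
  simp only [bwHZ, Matrix.of_apply]
  by_cases h1 : j < i
  · simp only [h1, if_true]
    have he := bwExp_ge_two m (i : ℕ) (j : ℕ) hi hj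
    have hpow : (bwExp m (i : ℕ) (j : ℕ)).toNat / 2 = (bwExp m (i:ℕ) (j:ℕ)).toNat / 2 - 1 + 1 := by
      omega
    rw [hpow, pow_succ]
    push_cast
    simp [show (2 : ZMod 2) = 0 from rfl]
  · simp only [h1, if_false]
    by_cases h2 : i = j
    · simp only [h2, if_true]
      have he := bwExp_diag_ge_four m (j : ℕ) hm (h2 ▸ hi)
      have hpow : ((bwExp m (j : ℕ) (j : ℕ)).toNat - 2) / 2
          = ((bwExp m (j:ℕ) (j:ℕ)).toNat - 2) / 2 - 1 + 1 := by omega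
      rw [hpow, pow_succ]
      push_cast
      simp [show (2 : ZMod 2) = 0 from rfl]
    · simp [h2]

def bwE (m a r : ℕ) (i k : Fin (2 ^ m)) : ZMod 2 :=
  if bwPar m (i : ℕ) = 0 ∧
      ((r = 1 ∧ bwBit (i : ℕ) (m - a) = 0 ∧ (k : ℕ) = (i : ℕ) + 2 ^ (m - a)) ∨
       (r ≠ 1 ∧ bwBit (i : ℕ) (m - a) = 1 ∧ (k : ℕ) + 2 ^ (m - a) = (i : ℕ)))
  then 1 else 0

lemma cast_two_pow_par (m i : ℕ) :
    (((2 : ℤ) ^ bwPar m i : ℤ) : ZMod 2) = if bwPar m i = 0 then 1 else 0 := by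
  have hp := bwPar_lt m i
  interval_cases h : bwPar m i <;> simp <;> decide

lemma bwSigma_mod (m a r : ℕ) (i k : Fin (2 ^ m)) :
    ((bwSigma m a r i k : ℤ) : ZMod 2) = (if k = i then 1 else 0) + bwE m a r i k := by
  have hpow : 0 < 2 ^ (m - a) := Nat.two_pow_pos _
  simp only [bwSigma, bwE, Matrix.of_apply]
  by_cases hr : r = 1
  · simp only [hr, if_true]
    by_cases hbit : bwBit (i : ℕ) (m - a) = 0
    · simp only [hbit, if_true]
      by_cases hk : k = i
      · have hrel : ¬ ((k : ℕ) = (i : ℕ) + 2 ^ (m - a)) := by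
          rw [hk]; omega
        simp [hk, hrel]
      · simp only [hk, if_false]
        by_cases hrel : (k : ℕ) = (i : ℕ) + 2 ^ (m - a)
        · simp only [hrel, if_true, zero_add]
          rw [cast_two_pow_par]
          by_cases hp : bwPar m (i : ℕ) = 0 <;> simp [hp, hbit, hrel]
        · simp [hrel, hbit]
    · simp only [hbit, if_false]
      by_cases hk : k = i <;> simp [hk, hbit]
  · simp only [hr, if_false]
    by_cases hbit : bwBit (i : ℕ) (m - a) = 1
    · simp only [hbit, if_true]
      by_cases hk : k = i
      · have hrel : ¬ ((k : ℕ) + 2 ^ (m - a) = (i : ℕ)) := by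
          rw [hk]; omega
        simp [hk, hrel, hr]
      · simp only [hk, if_false]
        by_cases hrel : (k : ℕ) + 2 ^ (m - a) = (i : ℕ)
        · simp only [hrel, if_true, zero_add]
          rw [cast_two_pow_par]
          by_cases hp : bwPar m (i : ℕ) = 0 <;> simp [hp, hbit, hrel, hr]
        · simp [hrel, hbit, hr]
    · simp only [hbit, if_false]
      by_cases hk : k = i <;> simp [hk, hbit, hr]

lemma bwE_ne (m a r : ℕ) (ha : 1 ≤ a) (ha' : a ≤ m) (i k : Fin (2 ^ m))
    (h : bwE m a r i k ≠ 0) : bwPar m (i : ℕ) = 0 ∧ bwPar m (k : ℕ) = 1 := by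
  have hc : m - a < m := by omega
  simp only [bwE, ne_eq, ite_eq_right_iff, not_forall] at h
  obtain ⟨⟨hp, hcase⟩, -⟩ := h
  refine ⟨hp, ?_⟩
  rcases hcase with ⟨-, hbit, hrel⟩ | ⟨-, hbit, hrel⟩
  · rw [hrel, bwPar_flip_add m (i : ℕ) (m - a) hc hbit, hp]
  · rw [bwPar_flip_sub m (i : ℕ) (m - a) (k : ℕ) hc hbit hrel, hp]

lemma bwKey (m a r : ℕ) (hm : 2 ≤ m) (ha : 1 ≤ a) (ha' : a ≤ m) (i j : Fin (2 ^ m))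
    (h : bwPar m (i : ℕ) = 1 ∨ bwPar m (j : ℕ) = 1) :
    (((bwHZ m - bwSigma m a r * bwHZ m * (bwSigma m a r)ᵀ) i j : ℤ) : ZMod 2) = 0 := by
  set S := bwSigma m a r with hS
  set e : Fin (2 ^ m) → Fin (2 ^ m) → ZMod 2 := bwE m a r with he
  set Hb : Fin (2 ^ m) → Fin (2 ^ m) → ZMod 2 := fun k l => ((bwHZ m k l : ℤ) : ZMod 2) with hHb
  have hcast : (((bwHZ m - S * bwHZ m * Sᵀ) i j : ℤ) : ZMod 2)
      = Hb i j - ∑ l, (∑ k, ((S i k : ℤ) : ZMod 2) * Hb k l) * ((S j l : ℤ) : ZMod 2) := by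
    simp only [Matrix.sub_apply, Matrix.mul_apply, Matrix.transpose_apply]
    push_cast
    ring
  rw [hcast]
  have hrow : ∀ (u k : Fin (2 ^ m)),
      ((S u k : ℤ) : ZMod 2) = (if k = u then 1 else 0) + e u k := fun u k =>
    bwSigma_mod m a r u k
  have expand1 : ∀ l : Fin (2 ^ m), (∑ k, ((S i k : ℤ) : ZMod 2) * Hb k l)
      = Hb i l + ∑ k, e i k * Hb k l := by
    intro l
    simp only [hrow, add_mul, Finset.sum_add_distrib, ite_mul, one_mul, zero_mul]
    rw [Finset.sum_ite_eq' Finset.univ i (fun k => Hb k l)]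
    simp
  have hmain : (∑ l, (∑ k, ((S i k : ℤ) : ZMod 2) * Hb k l) * ((S j l : ℤ) : ZMod 2))
      = Hb i j + ((∑ l, Hb i l * e j l) + (∑ k, e i k * Hb k j)
          + ∑ l, (∑ k, e i k * Hb k l) * e j l) := by
    have hstep : (∑ l, (∑ k, ((S i k : ℤ) : ZMod 2) * Hb k l) * ((S j l : ℤ) : ZMod 2))
        = ∑ l, (Hb i l + ∑ k, e i k * Hb k l) * ((if l = j then 1 else 0) + e j l) :=
      Finset.sum_congr rfl fun l _ => by rw [expand1 l, hrow j l]
    rw [hstep]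
    simp only [add_mul, mul_add, Finset.sum_add_distrib, mul_ite, mul_one, mul_zero]
    rw [Finset.sum_ite_eq' Finset.univ j (fun l => Hb i l + ∑ k, e i k * Hb k l)]
    simp only [Finset.mem_univ, if_true]
    ring
  rw [hmain]
  have hepar : ∀ u k, e u k ≠ 0 → bwPar m (u : ℕ) = 0 ∧ bwPar m (k : ℕ) = 1 :=
    fun u k hk => bwE_ne m a r ha ha' u k hk
  rcases h with hp | hp
  · have hei : ∀ k, e i k = 0 := by
      intro k; by_contra hk
      exact absurd (hepar i k hk).1 (by rw [hp]; norm_num)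
    have h2 : (∑ l, Hb i l * e j l) = 0 := by
      apply Finset.sum_eq_zero; intro l _
      by_cases hl : e j l = 0
      · rw [hl, mul_zero]
      · have hz : Hb i l = 0 := bwHZ_par_even m hm i l hp (hepar j l hl).2
        rw [hz, zero_mul]
    have h3 : (∑ k, e i k * Hb k j) = 0 := by
      apply Finset.sum_eq_zero; intro k _; rw [hei k, zero_mul]
    have h4 : (∑ l, (∑ k, e i k * Hb k l) * e j l) = 0 := by
      apply Finset.sum_eq_zero; intro l _
      have : (∑ k, e i k * Hb k l) = 0 := by
        apply Finset.sum_eq_zero; intro k _; rw [hei k, zero_mul]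
      rw [this, zero_mul]
    rw [h2, h3, h4]
    ring
  · have hej : ∀ l, e j l = 0 := by
      intro l; by_contra hl
      exact absurd (hepar j l hl).1 (by rw [hp]; norm_num)
    have h2 : (∑ l, Hb i l * e j l) = 0 := by
      apply Finset.sum_eq_zero; intro l _; rw [hej l, mul_zero]
    have h3 : (∑ k, e i k * Hb k j) = 0 := by
      apply Finset.sum_eq_zero; intro k _
      by_cases hk : e i k = 0
      · rw [hk, zero_mul]
      · have hz : Hb k j = 0 := bwHZ_par_even m hm k j (hepar i k hk).2 hp
        rw [hz, mul_zero]
    have h4 : (∑ l, (∑ k, e i k * Hb k l) * e j l) = 0 := by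
      apply Finset.sum_eq_zero; intro l _; rw [hej l, mul_zero]
    rw [h2, h3, h4]
    ring

lemma bwVecMul_par (m b s : ℕ) (hb : 1 ≤ b) (hb' : b ≤ m) (α : Fin (2 ^ m) → ℤ)
    (i : Fin (2 ^ m)) (hpi : bwPar m (i : ℕ) = 0) :
    ((Matrix.vecMul α (bwSigma m b s) i : ℤ) : ZMod 2) = ((α i : ℤ) : ZMod 2) := by
  have hvm : Matrix.vecMul α (bwSigma m b s) i = ∑ k, α k * bwSigma m b s k i := by
    simp [Matrix.vecMul, dotProduct]
  rw [hvm]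
  push_cast
  have hterm : ∀ k : Fin (2 ^ m), ((α k : ℤ) : ZMod 2) * ((bwSigma m b s k i : ℤ) : ZMod 2)
      = (if i = k then ((α k : ℤ) : ZMod 2) else 0) := by
    intro k
    rw [bwSigma_mod m b s k i, mul_add]
    have hz : ((α k : ℤ) : ZMod 2) * bwE m b s k i = 0 := by
      by_cases hk : bwE m b s k i = 0
      · rw [hk, mul_zero]
      · have := (bwE_ne m b s hb hb' k i hk).2
        rw [hpi] at this; norm_num at this
    rw [hz, add_zero]
    by_cases hik : i = k <;> simp [hik]
  rw [Finset.sum_congr rfl fun k _ => hterm k, Finset.sum_ite_eq Finset.univ i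
    (fun k => ((α k : ℤ) : ZMod 2))]
  simp

/-- For `m ≥ 3`, `u_{Σ_{ar}}(α Σ_{bs}) = u_{Σ_{ar}}(α)` for all `α` and all generators. -/
theorem bwU_invariant (m : ℕ) (hm : 3 ≤ m) (a b r s : ℕ)
    (ha : 1 ≤ a) (ha' : a ≤ m) (hb : 1 ≤ b) (hb' : b ≤ m)
    (hr : r = 1 ∨ r = 2) (hs : s = 1 ∨ s = 2) (α : Fin (2 ^ m) → ℤ) :
    bwU m (bwSigma m a r) (Matrix.vecMul α (bwSigma m b s)) = bwU m (bwSigma m a r) α := by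
  have hm2 : 2 ≤ m := by omega
  set S := bwSigma m a r with hSdef
  set β := Matrix.vecMul α (bwSigma m b s) with hβ
  set CZ : Matrix (Fin (2 ^ m)) (Fin (2 ^ m)) ℤ := bwHZ m - S * bwHZ m * Sᵀ with hCZ
  have hBMat : ∀ i j, bwBMat m S i j = ((CZ i j : ℤ) : ℝ) := by
    intro i j
    have hH : ∀ k l, bwH m k l = ((bwHZ m k l : ℤ) : ℝ) := by
      intro k l
      rw [show bwH m = (bwHZ m).map (Int.cast : ℤ → ℝ) from bwH_eq_map m hm2]
      rfl
    simp only [bwBMat, hCZ, Matrix.sub_apply, Matrix.mul_apply, Matrix.transpose_apply,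
      Matrix.map_apply, hH]
    push_cast
    ring
  have hquad : ∀ γ : Fin (2 ^ m) → ℤ, bwBQuad m S γ γ
      = ((∑ i, ∑ j, if j < i then γ i * γ j * CZ i j else 0 : ℤ) : ℝ) := by
    intro γ
    rw [bwBQuad]
    push_cast
    apply Finset.sum_congr rfl
    intro i _
    apply Finset.sum_congr rfl
    intro j _
    by_cases hij : j < i <;> simp [hij, hBMat i j]
  set NZ : (Fin (2 ^ m) → ℤ) → ℤ :=
    fun γ => ∑ i, ∑ j, if j < i then γ i * γ j * CZ i j else 0 with hNZ
  have hdvd : (2 : ℤ) ∣ (NZ β - NZ α) := by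
    have hzero : ((NZ β - NZ α : ℤ) : ZMod 2) = 0 := by
      rw [hNZ]
      push_cast
      rw [← Finset.sum_sub_distrib]
      apply Finset.sum_eq_zero
      intro i _
      rw [← Finset.sum_sub_distrib]
      apply Finset.sum_eq_zero
      intro j _
      by_cases hij : j < i
      · simp only [hij, if_true]
        have hpi := bwPar_lt m (i : ℕ)
        have hpj := bwPar_lt m (j : ℕ)
        by_cases hpar : bwPar m (i : ℕ) = 0 ∧ bwPar m (j : ℕ) = 0
        · have hbi : ((β i : ℤ) : ZMod 2) = ((α i : ℤ) : ZMod 2) :=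
            bwVecMul_par m b s hb hb' α i hpar.1
          have hbj : ((β j : ℤ) : ZMod 2) = ((α j : ℤ) : ZMod 2) :=
            bwVecMul_par m b s hb hb' α j hpar.2
          rw [hbi, hbj]
          ring
        · have hor : bwPar m (i : ℕ) = 1 ∨ bwPar m (j : ℕ) = 1 := by omega
          have hkey : ((CZ i j : ℤ) : ZMod 2) = 0 := bwKey m a r hm2 ha ha' i j hor
          rw [hkey]
          ring
      · simp [hij]
    exact (ZMod.intCast_zmod_eq_zero_iff_dvd _ 2).mp hzero
  obtain ⟨k, hk⟩ := hdvd
  have hk' : NZ β = NZ α + 2 * k := by omega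
  rw [bwU, bwU, hquad β, hquad α]
  rw [show (∑ i, ∑ j, if j < i then β i * β j * CZ i j else 0 : ℤ) = NZ β from rfl,
    show (∑ i, ∑ j, if j < i then α i * α j * CZ i j else 0 : ℤ) = NZ α from rfl, hk']
  have harg : Real.pi * ((NZ α + 2 * k : ℤ) : ℝ)
      = Real.pi * ((NZ α : ℤ) : ℝ) + (k : ℝ) * (2 * Real.pi) := by
    push_cast
    ring
  rw [harg, Real.cos_add_int_mul_two_pi]
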